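/- (Multiplicative domain) Let B and C be unital C*-algebras, Ψ : B → C a unital completely positive map, and b ∈ B an element satisfying Ψ(b*b) = Ψ(b)*Ψ(b) and Ψ(bb*) = Ψ(b)Ψ(b)*. Then for every x ∈ B one has Ψ(bx) = Ψ(b)Ψ(x) and Ψ(xb) = Ψ(x)Ψ(b). -/
import Mathlib


/-- An element of a matrix algebra over a C*-algebra is positive iff it factors as `Nᴴ * N`. -/
def Matrix.IsPosMat {A : Type*} [Ring A] [StarRing A] {n : ℕ}
    (M : Matrix (Fin n) (Fin n) A) : Prop :=
  ∃ N : Matrix (Fin n) (Fin n) A, M = N.conjTranspose * N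

/-- A linear map between C*-algebras is unital completely positive (ucp) if it is unital and,
for every `n`, the induced map on `n × n` matrices (applying the map entrywise) maps positive
elements to positive elements. -/
structure IsUCP {A B : Type*} [Ring A] [StarRing A] [Algebra ℂ A] [Ring B] [StarRing B]
    [Algebra ℂ B] (Φ : A →ₗ[ℂ] B) : Prop where
  unital : Φ 1 = 1
  cp : ∀ (n : ℕ) (M : Matrix (Fin n) (Fin n) A), M.IsPosMat → (M.map Φ).IsPosMat

section Aux

open Matrix

variable {C : Type*} [CStarAlgebra C]

/-- The conjugation matrix used in the multiplicative-domain argument. -/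
private def ucpR (u v : C) : Matrix (Fin 4) (Fin 4) C :=
  !![-u, -v, 0, 0; 0, 0, 0, 0; 1, 0, 0, 0; 0, 1, 0, 0]

private lemma ucpR_q00 (P : Matrix (Fin 4) (Fin 4) C) (u v : C) :
    ((ucpR u v)ᴴ * P * ucpR u v) 0 0
      = star u * P 0 0 * u - star u * P 0 2 - P 2 0 * u + P 2 2 := by
  simp [ucpR, Matrix.mul_apply, Fin.sum_univ_four, Matrix.conjTranspose_apply]
  noncomm_ring

private lemma ucpR_q01 (P : Matrix (Fin 4) (Fin 4) C) (u v : C) :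
    ((ucpR u v)ᴴ * P * ucpR u v) 0 1
      = star u * P 0 0 * v - star u * P 0 3 - P 2 0 * v + P 2 3 := by
  simp [ucpR, Matrix.mul_apply, Fin.sum_univ_four, Matrix.conjTranspose_apply]
  noncomm_ring

/-- The positive matrix used in the multiplicative-domain argument. -/
private def ucpN {B : Type*} [CStarAlgebra B] (c x : B) : Matrix (Fin 4) (Fin 4) B :=
  !![1, 0, c, x; 0, 1, 0, 0; 0, 0, 0, 0; 0, 0, 0, 0]

private lemma ucpN_entries {B : Type*} [CStarAlgebra B] (c x : B) :
    ((ucpN c x)ᴴ * ucpN c x) 0 0 = 1 ∧ ((ucpN c x)ᴴ * ucpN c x) 0 2 = c ∧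
    ((ucpN c x)ᴴ * ucpN c x) 0 3 = x ∧ ((ucpN c x)ᴴ * ucpN c x) 2 0 = star c ∧
    ((ucpN c x)ᴴ * ucpN c x) 2 2 = star c * c ∧ ((ucpN c x)ᴴ * ucpN c x) 2 3 = star c * x := by
  refine ⟨?_, ?_, ?_, ?_, ?_, ?_⟩ <;>
    simp [ucpN, Matrix.mul_apply, Fin.sum_univ_four, Matrix.conjTranspose_apply,
      Matrix.vecHead, Matrix.vecTail]

/-- If a sum of four elements of the form `star a * a` vanishes, the first summand's base
element vanishes. -/
private lemma ucp_sum4 (a b c d : C)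
    (h : star a * a + star b * b + star c * c + star d * d = 0) : a = 0 := by
  letI := CStarAlgebra.spectralOrder C
  letI := CStarAlgebra.spectralOrderedRing C
  have ha := star_mul_self_nonneg a
  have key : star a * a = 0 := by
    have h1 : star a * a ≤ 0 := by
      calc star a * a ≤ star a * a + (star b * b + star c * c + star d * d) :=
            le_add_of_nonneg_right (add_nonneg (add_nonneg (star_mul_self_nonneg b)
              (star_mul_self_nonneg c)) (star_mul_self_nonneg d))
        _ = 0 := by rw [← h]; simp only [add_assoc]
    exact le_antisymm h1 ha
  exact (CStarRing.star_mul_self_eq_zero_iff a).mp key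

/-- Every ucp map is star-preserving. -/
private lemma ucp_star {B : Type*} [CStarAlgebra B]
    (Ψ : B →ₗ[ℂ] C) (hΨ : IsUCP Ψ) (a : B) : Ψ (star a) = star (Ψ a) := by
  set N : Matrix (Fin 2) (Fin 2) B := !![1, a; 0, 0] with hN
  obtain ⟨K, hK⟩ := hΨ.cp 2 (Nᴴ * N) ⟨N, rfl⟩
  have hsa : ((Nᴴ * N).map Ψ)ᴴ = (Nᴴ * N).map Ψ := by
    rw [hK, Matrix.conjTranspose_mul, Matrix.conjTranspose_conjTranspose]
  have h10 : ((Nᴴ * N).map Ψ) 1 0 = Ψ (star a) := by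
    simp [hN, Matrix.mul_apply, Fin.sum_univ_two, Matrix.conjTranspose_apply]
  have h01 : ((Nᴴ * N).map Ψ) 0 1 = Ψ a := by
    simp [hN, Matrix.mul_apply, Fin.sum_univ_two, Matrix.conjTranspose_apply]
  have := congrFun (congrFun hsa 1) 0
  rw [Matrix.conjTranspose_apply, h10, h01] at this
  exact this.symm ▸ this

/-- The key one-sided multiplicative-domain property of a ucp map. -/
private lemma ucp_key {B : Type*} [CStarAlgebra B]
    (Ψ : B →ₗ[ℂ] C) (hΨ : IsUCP Ψ) (c x : B)
    (h : Ψ (star c * c) = star (Ψ c) * Ψ c) :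
    Ψ (star c * x) = star (Ψ c) * Ψ x := by
  obtain ⟨K, hK⟩ := hΨ.cp 4 ((ucpN c x)ᴴ * ucpN c x) ⟨ucpN c x, rfl⟩
  set P : Matrix (Fin 4) (Fin 4) C := ((ucpN c x)ᴴ * ucpN c x).map Ψ with hP
  obtain ⟨e00, e02, e03, e20, e22, e23⟩ := ucpN_entries c x
  have hsc : Ψ (star c) = star (Ψ c) := ucp_star Ψ hΨ c
  have p00 : P 0 0 = 1 := by rw [hP, Matrix.map_apply, e00, hΨ.unital]
  have p02 : P 0 2 = Ψ c := by rw [hP, Matrix.map_apply, e02]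
  have p03 : P 0 3 = Ψ x := by rw [hP, Matrix.map_apply, e03]
  have p20 : P 2 0 = star (Ψ c) := by rw [hP, Matrix.map_apply, e20, hsc]
  have p22 : P 2 2 = star (Ψ c) * Ψ c := by rw [hP, Matrix.map_apply, e22, h]
  have p23 : P 2 3 = Ψ (star c * x) := by rw [hP, Matrix.map_apply, e23]
  set R : Matrix (Fin 4) (Fin 4) C := ucpR (Ψ c) (Ψ x) with hR
  set L : Matrix (Fin 4) (Fin 4) C := K * R with hL
  have hQ : Lᴴ * L = Rᴴ * P * R := by
    rw [hL, hK, Matrix.conjTranspose_mul, Matrix.mul_assoc, Matrix.mul_assoc,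
      Matrix.mul_assoc]
  have h00 : (Rᴴ * P * R) 0 0 = 0 := by
    rw [hR, ucpR_q00, p00, p02, p20, p22]
    noncomm_ring
  have h01 : (Rᴴ * P * R) 0 1 = Ψ (star c * x) - star (Ψ c) * Ψ x := by
    rw [hR, ucpR_q01, p00, p03, p20, p23]
    noncomm_ring
  have hL00 : (Lᴴ * L) 0 0 = star (L 0 0) * L 0 0 + star (L 1 0) * L 1 0
      + star (L 2 0) * L 2 0 + star (L 3 0) * L 3 0 := by
    simp [Matrix.mul_apply, Fin.sum_univ_four, Matrix.conjTranspose_apply, add_assoc]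
  have hs : star (L 0 0) * L 0 0 + star (L 1 0) * L 1 0
      + star (L 2 0) * L 2 0 + star (L 3 0) * L 3 0 = 0 := by
    rw [← hL00, hQ, h00]
  have hzero : L 0 0 = 0 ∧ L 1 0 = 0 ∧ L 2 0 = 0 ∧ L 3 0 = 0 := by
    refine ⟨ucp_sum4 _ _ _ _ hs, ucp_sum4 (L 1 0) (L 0 0) (L 2 0) (L 3 0) ?_,
      ucp_sum4 (L 2 0) (L 0 0) (L 1 0) (L 3 0) ?_,
      ucp_sum4 (L 3 0) (L 0 0) (L 1 0) (L 2 0) ?_⟩ <;> rw [← hs] <;> abel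
  have hL01 : (Lᴴ * L) 0 1 = 0 := by
    simp [Matrix.mul_apply, Fin.sum_univ_four, Matrix.conjTranspose_apply,
      hzero.1, hzero.2.1, hzero.2.2.1, hzero.2.2.2]
  rw [hQ, h01] at hL01
  exact sub_eq_zero.mp hL01

end Aux

/-- Multiplicative domain: if a ucp map `Ψ` satisfies `Ψ(b⋆b) = Ψ(b)⋆Ψ(b)` and
`Ψ(bb⋆) = Ψ(b)Ψ(b)⋆`, then `b` lies in the multiplicative domain of `Ψ`. -/
theorem ucp_multiplicative_domain
    {B C : Type*} [CStarAlgebra B] [CStarAlgebra C]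
    (Ψ : B →ₗ[ℂ] C) (hΨ : IsUCP Ψ) (b : B)
    (h₁ : Ψ (star b * b) = star (Ψ b) * Ψ b)
    (h₂ : Ψ (b * star b) = Ψ b * star (Ψ b)) :
    ∀ x : B, Ψ (b * x) = Ψ b * Ψ x ∧ Ψ (x * b) = Ψ x * Ψ b := by
  intro x
  have hstar := ucp_star Ψ hΨ
  constructor
  · have hc : Ψ (star (star b) * star b) = star (Ψ (star b)) * Ψ (star b) := by
      rw [star_star, hstar b, star_star]
      exact h₂
    have key := ucp_key Ψ hΨ (star b) x hc
    rwa [star_star, hstar b, star_star] at key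
  · have key := ucp_key Ψ hΨ b (star x) h₁
    have hx : Ψ (x * b) = star (Ψ (star (x * b))) := by rw [hstar, star_star]
    rw [hx, star_mul, key, star_mul, hstar x, star_star, star_star]
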